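/- Type preservation for eliminating simple variant subtyping: the local term-involved translation ⟦-⟧ from λ_⟨⟩^{≤} to λ_⟨⟩, which replaces each upcast M^{⟨ℓ_i:A_i⟩_i} ▷ ⟨R⟩ by case ⟦M⟧ {ℓ_i x_i ↦ (ℓ_i x_i)^{⟨R⟩}}_i and is homomorphic elsewhere, maps every well-typed term Δ;Γ ⊢ M : A to a well-typed term Δ;Γ ⊢ ⟦M⟧ : A. -/

import Mathlib

namespace Stmt4

abbrev Label := ℕ

/-- Types of λ_⟨⟩^{≤}: base type variables, functions, variant types over rows. -/
inductive Ty : Type where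
  | tvar : ℕ → Ty
  | arrow : Ty → Ty → Ty
  | variant : List (Label × Ty) → Ty

/-- Simple (width) variant subtyping on rows:
dom(R) ⊆ dom(R') and R'|_{dom R} = R. -/
def VSub (R R' : List (Label × Ty)) : Prop :=
  ∀ ℓ A, List.lookup ℓ R = some A → List.lookup ℓ R' = some A

/-- Subtyping on types of λ_⟨⟩^{≤}: only the shallow variant rule. -/
inductive Sub : Ty → Ty → Prop where
  | variant {R R'} : VSub R R' → Sub (.variant R) (.variant R')

/-- Terms, de Bruijn indices.  `inj ℓ M A` is the annotated injection (ℓ M)^A and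
`upcast M A B` is the annotated upcast M^A ▷ B. -/
inductive Tm : Type where
  | var : ℕ → Tm
  | lam : Ty → Tm → Tm
  | app : Tm → Tm → Tm
  | inj : Label → Tm → Ty → Tm
  | case : Tm → List (Label × Tm) → Tm
  | upcast : Tm → Ty → Ty → Tm

mutual
/-- Shift de Bruijn indices ≥ c up by one. -/
def shiftTm (c : ℕ) : Tm → Tm
  | .var n => if n < c then .var n else .var (n + 1)
  | .lam A M => .lam A (shiftTm (c + 1) M)
  | .app M N => .app (shiftTm c M) (shiftTm c N)
  | .inj ℓ M A => .inj ℓ (shiftTm c M) A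
  | .case M Bs => .case (shiftTm c M) (shiftBs (c + 1) Bs)
  | .upcast M A B => .upcast (shiftTm c M) A B
def shiftBs (c : ℕ) : List (Label × Tm) → List (Label × Tm)
  | [] => []
  | (ℓ, M) :: Bs => (ℓ, shiftTm c M) :: shiftBs c Bs
end

mutual
/-- Capture-avoiding substitution of N for de Bruijn index k. -/
def substTm (k : ℕ) (N : Tm) : Tm → Tm
  | .var n => if n = k then N else if n < k then .var n else .var (n - 1)
  | .lam A M => .lam A (substTm (k + 1) (shiftTm 0 N) M)
  | .app M₁ M₂ => .app (substTm k N M₁) (substTm k N M₂)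
  | .inj ℓ M A => .inj ℓ (substTm k N M) A
  | .case M Bs => .case (substTm k N M) (substBs (k + 1) (shiftTm 0 N) Bs)
  | .upcast M A B => .upcast (substTm k N M) A B
def substBs (k : ℕ) (N : Tm) : List (Label × Tm) → List (Label × Tm)
  | [] => []
  | (ℓ, M) :: Bs => (ℓ, substTm k N M) :: substBs k N Bs
end

/-- Typing of λ_⟨⟩^{≤} (contexts are de Bruijn lists of types). -/
inductive HasTy : List Ty → Tm → Ty → Prop where
  | var {Γ n A} : Γ[n]? = some A → HasTy Γ (.var n) A
  | lam {Γ A B M} : HasTy (A :: Γ) M B → HasTy Γ (.lam A M) (.arrow A B)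
  | app {Γ A B M N} : HasTy Γ M (.arrow A B) → HasTy Γ N A → HasTy Γ (.app M N) B
  | inj {Γ ℓ R A M} : List.lookup ℓ R = some A → HasTy Γ M A →
      HasTy Γ (.inj ℓ M (.variant R)) (.variant R)
  | case {Γ R M Bs C} : HasTy Γ M (.variant R) →
      (∀ ℓ A, List.lookup ℓ R = some A → (List.lookup ℓ Bs).isSome) →
      (∀ ℓ A N, List.lookup ℓ R = some A → List.lookup ℓ Bs = some N →
        HasTy (A :: Γ) N C) →
      HasTy Γ (.case M Bs) C
  | upcast {Γ R R' M} : HasTy Γ M (.variant R) → VSub R R' →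
      HasTy Γ (.upcast M (.variant R) (.variant R')) (.variant R')

mutual
/-- The local term-involved translation ⟦-⟧ from λ_⟨⟩^{≤} to λ_⟨⟩:
upcasts are η-expanded into case splits; homomorphic elsewhere. -/
def trTm : Tm → Tm
  | .var n => .var n
  | .lam A M => .lam A (trTm M)
  | .app M N => .app (trTm M) (trTm N)
  | .inj ℓ M A => .inj ℓ (trTm M) A
  | .case M Bs => .case (trTm M) (trBs Bs)
  | .upcast M (.variant R) B =>
      .case (trTm M) (R.map (fun p => (p.1, Tm.inj p.1 (Tm.var 0) B)))
  | .upcast M A _ => .upcast (trTm M) A A  -- impossible for well-typed terms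
def trBs : List (Label × Tm) → List (Label × Tm)
  | [] => []
  | (ℓ, M) :: Bs => (ℓ, trTm M) :: trBs Bs
end

/-- A term of λ_⟨⟩ (upcast-free). -/
def UpcastFree : Tm → Prop := fun _ => True

/-- β-reduction base rules. -/
inductive Beta : Tm → Tm → Prop where
  | lam {A M N} : Beta (.app (.lam A M) N) (substTm 0 N M)
  | case {ℓ M A Bs N} : List.lookup ℓ Bs = some N →
      Beta (.case (.inj ℓ M A) Bs) (substTm 0 M N)

/-- Upcast reduction base rule: (ℓ M)^A ▷ B ⇝ (ℓ M)^B. -/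
inductive Up : Tm → Tm → Prop where
  | inj {ℓ M A' A B} : Up (.upcast (.inj ℓ M A') A B) (.inj ℓ M B)

/-- Compatible closure of a base reduction relation. -/
inductive Compat (r : Tm → Tm → Prop) : Tm → Tm → Prop where
  | base {M N} : r M N → Compat r M N
  | lam {A M M'} : Compat r M M' → Compat r (.lam A M) (.lam A M')
  | appL {M M' N} : Compat r M M' → Compat r (.app M N) (.app M' N)
  | appR {M N N'} : Compat r N N' → Compat r (.app M N) (.app M N')
  | inj {ℓ M M' A} : Compat r M M' → Compat r (.inj ℓ M A) (.inj ℓ M' A)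
  | caseScrut {M M' Bs} : Compat r M M' → Compat r (.case M Bs) (.case M' Bs)
  | caseBranch {M Bs₁ Bs₂ ℓ N N'} : Compat r N N' →
      Compat r (.case M (Bs₁ ++ (ℓ, N) :: Bs₂)) (.case M (Bs₁ ++ (ℓ, N') :: Bs₂))
  | upcast {M M' A B} : Compat r M M' → Compat r (.upcast M A B) (.upcast M' A B)

/-- One-step reduction by β or upcast. -/
def BetaUp : Tm → Tm → Prop := fun M N => Beta M N ∨ Up M N


/-- Typing of the target calculus λ_⟨⟩ (no upcast rule). -/
inductive HasTyV : List Ty → Tm → Ty → Prop where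
  | var {Γ n A} : Γ[n]? = some A → HasTyV Γ (.var n) A
  | lam {Γ A B M} : HasTyV (A :: Γ) M B → HasTyV Γ (.lam A M) (.arrow A B)
  | app {Γ A B M N} : HasTyV Γ M (.arrow A B) → HasTyV Γ N A → HasTyV Γ (.app M N) B
  | inj {Γ ℓ R A M} : List.lookup ℓ R = some A → HasTyV Γ M A →
      HasTyV Γ (.inj ℓ M (.variant R)) (.variant R)
  | case {Γ R M Bs C} : HasTyV Γ M (.variant R) →
      (∀ ℓ A, List.lookup ℓ R = some A → (List.lookup ℓ Bs).isSome) →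
      (∀ ℓ A N, List.lookup ℓ R = some A → List.lookup ℓ Bs = some N →
        HasTyV (A :: Γ) N C) →
      HasTyV Γ (.case M Bs) C

/-!
STATEMENT 4: Type preservation for eliminating simple variant subtyping:
if Δ;Γ ⊢ M : A in λ_⟨⟩^{≤} then Δ;Γ ⊢ ⟦M⟧ : A in λ_⟨⟩.
-/
lemma lookup_trBs (Bs : List (Label × Tm)) (ℓ : Label) :
    List.lookup ℓ (trBs Bs) = (List.lookup ℓ Bs).map trTm := by
  induction Bs with
  | nil => rfl
  | cons p Bs ih =>
    obtain ⟨ℓ', M⟩ := p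
    simp only [trBs, List.lookup]
    by_cases h : ℓ = ℓ'
    · simp [h]
    · have : (ℓ == ℓ') = false := by simpa using h
      simp [this, ih]

lemma lookup_map_inj (R : List (Label × Ty)) (B : Ty) (ℓ : Label) (A : Ty)
    (h : List.lookup ℓ R = some A) :
    List.lookup ℓ (R.map (fun p => (p.1, Tm.inj p.1 (Tm.var 0) B)))
      = some (Tm.inj ℓ (Tm.var 0) B) := by
  induction R with
  | nil => simp [List.lookup] at h
  | cons p R ih =>
    obtain ⟨ℓ', A'⟩ := p
    by_cases hℓ : ℓ = ℓ'
    · subst hℓ; simp [List.lookup]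
    · have hb : (ℓ == ℓ') = false := by simpa using hℓ
      simp only [List.map_cons, List.lookup, hb] at h ⊢
      exact ih h

theorem type_preservation {Γ : List Ty} {M : Tm} {A : Ty}
    (h : HasTy Γ M A) : HasTyV Γ (trTm M) A := by
  induction h with
  | var h => exact HasTyV.var h
  | lam _ ih => exact HasTyV.lam ih
  | app _ _ ih₁ ih₂ => exact HasTyV.app ih₁ ih₂
  | inj hl _ ih => exact HasTyV.inj hl ih
  | case _ hcov hty ihM ihBs =>
    refine HasTyV.case ihM ?_ ?_
    · intro ℓ A hA
      have := hcov ℓ A hA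
      rw [lookup_trBs]
      cases hx : List.lookup ℓ _ <;> simp_all
    · intro ℓ A N hA hN
      rw [lookup_trBs] at hN
      obtain ⟨N', hN', rfl⟩ := Option.map_eq_some_iff.mp hN
      exact ihBs ℓ A N' hA hN'
  | upcast hM hsub ih =>
    refine HasTyV.case ih ?_ ?_
    · intro ℓ A hA
      rw [lookup_map_inj _ _ _ _ hA]; rfl
    · intro ℓ A N hA hN
      rw [lookup_map_inj _ _ _ _ hA] at hN
      cases hN
      exact HasTyV.inj (hsub ℓ A hA) (HasTyV.var rfl)

end Stmt4
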